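/- Let m ≥ 2. (a) If i, j are integers with 0 ≤ i, i+2 ≤ α^(m), 0 ≤ j ≤ β^(m), the number α^(m) − i is even, and both P^(m)(i,j) and P^(m)(i+2,j) hold, then P^(m)(i+1,j) holds. (b) If i, j are integers with 0 ≤ i ≤ α^(m), 0 ≤ j, j+2 ≤ β^(m), the number β^(m) − j is even, and both P^(m)(i,j) and P^(m)(i,j+2) hold, then P^(m)(i,j+1) holds. -/
import Mathlib


open Module

/-- `α(m)`: the largest integer not exceeding `(2/3)·2^m`. -/
def alph (m : ℕ) : ℕ := 2 ^ (m + 1) / 3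

/-- `β(m)`: the largest integer not exceeding `(1/3)·2^m`. -/
def bet (m : ℕ) : ℕ := 2 ^ m / 3

/-- `wt x`: the number of ones in the binary representation of `x`. -/
def wtN (x : ℕ) : ℕ := (Nat.digits 2 x).count 1

/-- `w_l(S)`: the number of elements of `S` of binary weight at least `l`. -/
def wcount (l : ℕ) (S : Finset ℕ) : ℕ := (S.filter fun x => l ≤ wtN x).card

/-- The statement `P^(m)(i,j)`: for every `l ∈ {1,…,m}`,
`w_l([α−i, α−1]) + w_l([β−j, β−1]) ≥ w_l([1, i+j])`. -/
def Pm (m i j : ℕ) : Prop :=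
  ∀ l, 1 ≤ l → l ≤ m →
    wcount l (Finset.Icc (alph m - i) (alph m - 1)) +
      wcount l (Finset.Icc (bet m - j) (bet m - 1)) ≥
      wcount l (Finset.Icc 1 (i + j))

lemma wcount_insert (l y : ℕ) (S : Finset ℕ) (hy : y ∉ S) :
    wcount l (insert y S) = wcount l S + if l ≤ wtN y then 1 else 0 := by
  unfold wcount
  rw [Finset.filter_insert]
  split
  · rw [Finset.card_insert_of_notMem (by simp [hy])]
  · simp

lemma wcount_Icc_pred (l a N : ℕ) (h1 : 1 ≤ a) (h2 : a ≤ N + 1) :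
    wcount l (Finset.Icc (a - 1) N) =
      wcount l (Finset.Icc a N) + if l ≤ wtN (a - 1) then 1 else 0 := by
  have h : Finset.Icc (a - 1) N = insert (a - 1) (Finset.Icc a N) := by
    ext x; simp only [Finset.mem_Icc, Finset.mem_insert]; omega
  rw [h, wcount_insert]
  simp only [Finset.mem_Icc]; omega

lemma wcount_Icc_succ (l k : ℕ) :
    wcount l (Finset.Icc 1 (k + 1)) =
      wcount l (Finset.Icc 1 k) + if l ≤ wtN (k + 1) then 1 else 0 := by
  have h : Finset.Icc 1 (k + 1) = insert (k + 1) (Finset.Icc 1 k) := by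
    ext x; simp only [Finset.mem_Icc, Finset.mem_insert]; omega
  rw [h, wcount_insert]
  simp only [Finset.mem_Icc]; omega

lemma wtN_even_succ (x : ℕ) (hx : Even x) : wtN (x + 1) = wtN x + 1 := by
  obtain ⟨k, rfl⟩ := hx
  have hk2 : k + k = 2 * k := by ring
  rcases Nat.eq_zero_or_pos k with h | h
  · subst h; simp [wtN, Nat.digits_def' (by norm_num : 1 < 2) Nat.one_pos]
  · unfold wtN
    rw [Nat.digits_def' (by norm_num : 1 < 2) (by omega : 0 < k + k),
        Nat.digits_def' (by norm_num : 1 < 2) (by omega : 0 < k + k + 1)]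
    have e1 : (k + k) % 2 = 0 := by omega
    have e2 : (k + k) / 2 = k := by omega
    have e3 : (k + k + 1) % 2 = 1 := by omega
    have e4 : (k + k + 1) / 2 = k := by omega
    rw [e1, e2, e3, e4]
    simp

/-- Lemma 7: interpolation between `P^(m)(i,j)` statements. -/
theorem stmt16 (m : ℕ) (hm : 2 ≤ m) :
    (∀ i j : ℕ, i + 2 ≤ alph m → j ≤ bet m → Even (alph m - i) →
      Pm m i j → Pm m (i + 2) j → Pm m (i + 1) j) ∧
    (∀ i j : ℕ, i ≤ alph m → j + 2 ≤ bet m → Even (bet m - j) →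
      Pm m i j → Pm m i (j + 2) → Pm m i (j + 1)) := by
  constructor
  · intro i j hia hjb hev h0 h2 l hl1 hl2
    set a := alph m - i with ha
    have ha2 : 2 ≤ a := by omega
    have e1 : alph m - (i + 1) = a - 1 := by omega
    have e2 : alph m - (i + 2) = (a - 1) - 1 := by omega
    have hwt : wtN (a - 1) = wtN (a - 2) + 1 := by
      have : a - 1 = (a - 2) + 1 := by omega
      rw [this, wtN_even_succ]
      obtain ⟨k, hk⟩ := hev
      exact ⟨k - 1, by omega⟩
    have H0 := h0 l hl1 hl2
    rw [← ha] at H0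
    have H2 := h2 l hl1 hl2
    rw [e2, wcount_Icc_pred l (a - 1) (alph m - 1) (by omega) (by omega),
        wcount_Icc_pred l a (alph m - 1) (by omega) (by omega),
        show i + 2 + j = (i + j) + 1 + 1 by omega,
        wcount_Icc_succ, wcount_Icc_succ] at H2
    rw [e1, wcount_Icc_pred l a (alph m - 1) (by omega) (by omega),
        show i + 1 + j = (i + j) + 1 by omega, wcount_Icc_succ]
    have hrw : a - 1 - 1 = a - 2 := by omega
    rw [hrw] at H2
    rw [ge_iff_le] at *
    split_ifs at * <;> omega
  · intro i j hia hjb hev h0 h2 l hl1 hl2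
    set b := bet m - j with hb
    have hb2 : 2 ≤ b := by omega
    have e1 : bet m - (j + 1) = b - 1 := by omega
    have e2 : bet m - (j + 2) = (b - 1) - 1 := by omega
    have hwt : wtN (b - 1) = wtN (b - 2) + 1 := by
      have : b - 1 = (b - 2) + 1 := by omega
      rw [this, wtN_even_succ]
      obtain ⟨k, hk⟩ := hev
      exact ⟨k - 1, by omega⟩
    have H0 := h0 l hl1 hl2
    rw [← hb] at H0
    have H2 := h2 l hl1 hl2
    rw [e2, wcount_Icc_pred l (b - 1) (bet m - 1) (by omega) (by omega),
        wcount_Icc_pred l b (bet m - 1) (by omega) (by omega),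
        show i + (j + 2) = (i + j) + 1 + 1 by omega,
        wcount_Icc_succ, wcount_Icc_succ] at H2
    rw [e1, wcount_Icc_pred l b (bet m - 1) (by omega) (by omega),
        show i + (j + 1) = (i + j) + 1 by omega, wcount_Icc_succ]
    have hrw : b - 1 - 1 = b - 2 := by omega
    rw [hrw] at H2
    rw [ge_iff_le] at *
    split_ifs at * <;> omega
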